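/- Let G be a countable group and I a countable nonempty set, and let B⁰[G; I] be the Brandt semigroup over G with index set I. Then B⁰[G; I] is ℵ₀-categorical if and only if G is an ℵ₀-categorical group. -/
import Mathlib


/-- Two `n`-tuples of a semigroup are automorphically equivalent if some semigroup
automorphism maps one to the other componentwise. -/
def AutRel (S : Type*) [Semigroup S] {n : ℕ} (a b : Fin n → S) : Prop :=
  ∃ φ : S ≃* S, ∀ k, φ (a k) = b k

/-- A semigroup is ℵ₀-categorical if, for every `n ≥ 1`, the action of its automorphism
group on `n`-tuples has only finitely many orbits. -/
def Aleph0Categorical (S : Type*) [Semigroup S] : Prop :=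
  ∀ n : ℕ, 1 ≤ n → ∃ t : Set (Fin n → S), t.Finite ∧
    ∀ a : Fin n → S, ∃ b ∈ t, AutRel S b a

/-- The underlying set of the Brandt semigroup `B⁰[G; I]`: `(I × G × I) ∪ {0}`, the zero
being `none`. -/
abbrev Brandt (G I : Type*) : Type _ := Option (I × G × I)

open Classical in
/-- Multiplication of the Brandt semigroup `B⁰[G; I]`. -/
noncomputable def brandtMul {G I : Type*} [Group G] :
    Brandt G I → Brandt G I → Brandt G I
  | some (i, g, j), some (k, h, l) => if j = k then some (i, g * h, l) else none
  | _, _ => none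

noncomputable instance brandtSemigroup {G I : Type*} [Group G] : Semigroup (Brandt G I) where
  mul := brandtMul
  mul_assoc := by
    intro x y z
    show brandtMul (brandtMul x y) z = brandtMul x (brandtMul y z)
    rcases x with _ | ⟨i, g, j⟩ <;> rcases y with _ | ⟨k, h, l⟩ <;>
      rcases z with _ | ⟨m, p, q⟩ <;> simp only [brandtMul] <;>
      first
      | rfl
      | (by_cases h1 : j = k <;> by_cases h2 : l = m <;>
          simp [h1, h2, mul_assoc])
      | (by_cases h1 : j = k <;> simp [h1, mul_assoc])

section basics
variable {G I : Type*} [Group G]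

lemma brandt_mul_def (x y : Brandt G I) : x * y = brandtMul x y := rfl

lemma brandt_mul_none (x : Brandt G I) : x * none = none := by
  rcases x with _ | ⟨i, g, j⟩ <;> rfl

lemma brandt_none_mul (x : Brandt G I) : (none : Brandt G I) * x = none := by
  rcases x with _ | ⟨i, g, j⟩ <;> rfl

lemma brandt_map_none (φ : Brandt G I ≃* Brandt G I) : φ none = none := by
  have h1 : φ none * φ (φ.symm none) = φ (none * φ.symm none) := (map_mul φ _ _).symm
  rw [φ.apply_symm_apply, brandt_none_mul, brandt_mul_none] at h1
  exact h1.symm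

lemma brandt_corner_mul (i₀ : I) (g h : G) :
    (some (i₀, g, i₀) : Brandt G I) * some (i₀, h, i₀) = some (i₀, g * h, i₀) := by
  show brandtMul _ _ = _
  simp [brandtMul]

lemma brandt_sandwich (i₀ : I) (g : G) :
    (some (i₀, (1:G), i₀) : Brandt G I) * some (i₀, g, i₀) * some (i₀, 1, i₀)
      = some (i₀, g, i₀) := by
  rw [brandt_corner_mul, brandt_corner_mul]
  simp

lemma exists_corner_fun (i₀ : I) (φ : Brandt G I ≃* Brandt G I)
    (he : φ (some (i₀, 1, i₀)) = some (i₀, 1, i₀)) :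
    ∃ ψ : G → G, ∀ g : G, φ (some (i₀, g, i₀)) = some (i₀, ψ g, i₀) := by
  have key : ∀ g : G, ∃ u : G, φ (some (i₀, g, i₀)) = some (i₀, u, i₀) := by
    intro g
    have h1 : φ (some (i₀, g, i₀)) =
        some (i₀, (1:G), i₀) * φ (some (i₀, g, i₀)) * some (i₀, 1, i₀) := by
      conv_lhs => rw [← brandt_sandwich i₀ g]
      rw [map_mul, map_mul, he]
    rcases hx : φ (some (i₀, g, i₀)) with _ | ⟨a, u, b⟩
    · exact absurd (φ.injective (hx.trans (brandt_map_none φ).symm)) (by simp)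
    · rw [hx] at h1
      simp only [brandt_mul_def, brandtMul] at h1
      by_cases ha : i₀ = a <;> by_cases hb : b = i₀ <;>
        simp [ha, hb] at h1
      · exact ⟨u, by rw [← ha, hb]⟩
      · exact absurd (h1.trans ha.symm) hb
  exact ⟨fun g => (key g).choose, fun g => (key g).choose_spec⟩

lemma exists_corner_mulEquiv (i₀ : I) (φ : Brandt G I ≃* Brandt G I)
    (he : φ (some (i₀, 1, i₀)) = some (i₀, 1, i₀)) :
    ∃ ψ : G ≃* G, ∀ g : G, φ (some (i₀, g, i₀)) = some (i₀, ψ g, i₀) := by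
  obtain ⟨ψ, hψ⟩ := exists_corner_fun i₀ φ he
  have he' : φ.symm (some (i₀, 1, i₀)) = some (i₀, 1, i₀) := by
    conv_lhs => rw [← he]
    rw [φ.symm_apply_apply]
  obtain ⟨ψ', hψ'⟩ := exists_corner_fun i₀ φ.symm he'
  have hli : ∀ g : G, ψ' (ψ g) = g := by
    intro g
    have := φ.symm_apply_apply (some (i₀, g, i₀))
    rw [hψ, hψ'] at this
    exact congrArg (fun x => x.2.1) (Option.some_injective _ this)
  have hri : ∀ g : G, ψ (ψ' g) = g := by
    intro g
    have := φ.apply_symm_apply (some (i₀, g, i₀))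
    rw [hψ', hψ] at this
    exact congrArg (fun x => x.2.1) (Option.some_injective _ this)
  have hm : ∀ g h : G, ψ (g * h) = ψ g * ψ h := by
    intro g h
    have h1 : φ (some (i₀, g, i₀) * some (i₀, h, i₀)) =
        φ (some (i₀, g, i₀)) * φ (some (i₀, h, i₀)) := map_mul φ _ _
    rw [brandt_corner_mul, hψ, hψ, hψ, brandt_corner_mul] at h1
    exact congrArg (fun x => x.2.1) (Option.some_injective _ h1)
  exact ⟨⟨⟨ψ, ψ', hli, hri⟩, fun a b => hm a b⟩, hψ⟩

end basics

lemma exists_finite_reps {A B : Type*} (R : A → A → Prop) (f : A → B)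
    (hfin : (Set.range f).Finite) (h : ∀ a b : A, f a = f b → R a b) :
    ∃ t : Set A, t.Finite ∧ ∀ a : A, ∃ b ∈ t, R b a := by
  classical
  have hsec : ∀ x : Set.range f, ∃ a : A, f a = x := fun x => x.2
  choose sec hs using hsec
  have : Finite (Set.range f) := hfin
  refine ⟨Set.range sec, Set.finite_range sec, fun a => ?_⟩
  exact ⟨sec ⟨f a, Set.mem_range_self a⟩, Set.mem_range_self _,
    h _ _ (by rw [hs])⟩

noncomputable def brandtAut {G I : Type*} [Group G] (π : I ≃ I) (θ : G ≃* G) :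
    Brandt G I ≃* Brandt G I where
  toFun := Option.map (fun x => (π x.1, θ x.2.1, π x.2.2))
  invFun := Option.map (fun x => (π.symm x.1, θ.symm x.2.1, π.symm x.2.2))
  left_inv := by rintro (_ | ⟨i, g, j⟩) <;> simp
  right_inv := by rintro (_ | ⟨i, g, j⟩) <;> simp
  map_mul' := by
    rintro (_ | ⟨i, g, j⟩) (_ | ⟨k, h, l⟩) <;>
      simp only [brandt_mul_def] <;> try rfl
    by_cases h1 : j = k
    · subst h1; simp [brandtMul]
    · have h2 : π j ≠ π k := fun hc => h1 (π.injective hc)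
      simp [brandtMul, h1, h2]

open Cardinal in
lemma exists_perm_of_pattern {α : Type*} [Countable α] {ι : Type*} [Finite ι] (c d : ι → α)
    (h : ∀ p q, c p = c q ↔ d p = d q) : ∃ π : α ≃ α, ∀ p, π (c p) = d p := by
  classical
  set s : Set α := Set.range c with hs
  set t : Set α := Set.range d with ht
  have hF : ∀ x : s, ∃ p : ι, c p = x := fun x => x.2
  choose pick hpick using hF
  have Fbij : Function.Bijective (fun x : s => (⟨d (pick x), Set.mem_range_self _⟩ : t)) := by
    constructor
    · intro x y hxy
      have : d (pick x) = d (pick y) := congrArg Subtype.val hxy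
      have := (h _ _).mpr this
      exact Subtype.ext ((hpick x).symm.trans (this.trans (hpick y)))
    · rintro ⟨y, p, rfl⟩
      refine ⟨⟨c p, Set.mem_range_self _⟩, Subtype.ext ?_⟩
      exact (h _ _).mp (hpick ⟨c p, Set.mem_range_self _⟩)
  set e : s ≃ t := Equiv.ofBijective _ Fbij with he
  have hcard : Nonempty ((sᶜ : Set α) ≃ (tᶜ : Set α)) := by
    have h1 : (#s) + #(sᶜ : Set α) = #α := Cardinal.mk_sum_compl s
    have h2 : (#t) + #(tᶜ : Set α) = #α := Cardinal.mk_sum_compl t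
    have hst : (#s) = #t := Cardinal.mk_congr e
    have hlt : (#s) < Cardinal.aleph0 := (Set.finite_range c).lt_aleph0
    have : (#s) + #(sᶜ : Set α) = (#s) + #(tᶜ : Set α) := by
      rw [h1, hst, h2]
    exact Cardinal.eq.mp (Cardinal.eq_of_add_eq_add_left this hlt)
  obtain ⟨e'⟩ := hcard
  refine ⟨(Equiv.Set.sumCompl s).symm.trans ((e.sumCongr e').trans (Equiv.Set.sumCompl t)),
    fun p => ?_⟩
  have hmem : c p ∈ s := Set.mem_range_self p
  simp only [Equiv.trans_apply, Equiv.Set.sumCompl_symm_apply_of_mem hmem,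
    Equiv.sumCongr_apply, Sum.map_inl, Equiv.Set.sumCompl_apply_inl]
  show ((e ⟨c p, hmem⟩ : t) : α) = d p
  rw [he]
  show d (pick ⟨c p, hmem⟩) = d p
  exact (h _ _).mp (hpick ⟨c p, hmem⟩)

section main
variable {G I : Type*} [Group G]

/-- index extraction with default -/
def bflat (i₀ : I) {n : ℕ} (a : Fin n → Brandt G I) (p : Fin n × Bool) : I :=
  ((a p.1).map (fun x => if p.2 then x.1 else x.2.2)).getD i₀

/-- group-entry extraction with default -/
def bgt {n : ℕ} (a : Fin n → Brandt G I) (k : Fin n) : G :=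
  ((a k).map (fun x => x.2.1)).getD 1

end main

/-- A Brandt semigroup `B⁰[G; I]` over a countable group `G` with a countable nonempty
index set `I` is ℵ₀-categorical iff the group `G` is ℵ₀-categorical. -/
theorem brandt_aleph0Categorical_iff (G I : Type*) [Group G] [Countable G]
    [Countable I] [Nonempty I] :
    Aleph0Categorical (Brandt G I) ↔ Aleph0Categorical G := by
  classical
  obtain ⟨i₀⟩ := ‹Nonempty I›
  constructor
  · -- forward
    intro hB n hn
    obtain ⟨t, ht, hrep⟩ := hB (n + 1) (by omega)
    set emb : (Fin n → G) → (Fin (n + 1) → Brandt G I) :=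
      fun g => Fin.cons (some (i₀, 1, i₀)) (fun k => some (i₀, g k, i₀)) with hemb
    apply exists_finite_reps (AutRel G) (fun x => (hrep (emb x)).choose)
    · apply Set.Finite.subset ht
      rintro _ ⟨x, rfl⟩
      exact (hrep (emb x)).choose_spec.1
    · intro x y hxy
      obtain ⟨_, φ₁, hφ₁⟩ := (hrep (emb x)).choose_spec
      obtain ⟨_, φ₂, hφ₂⟩ := (hrep (emb y)).choose_spec
      rw [hxy] at hφ₁
      set Φ : Brandt G I ≃* Brandt G I := φ₁.symm.trans φ₂ with hΦdef
      have hΦ : ∀ k, Φ (emb x k) = emb y k := by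
        intro k
        show φ₂ (φ₁.symm (emb x k)) = emb y k
        rw [← hφ₁ k, φ₁.symm_apply_apply, hφ₂]
      have he : Φ (some (i₀, 1, i₀)) = some (i₀, 1, i₀) := by
        have := hΦ 0
        simpa [hemb] using this
      obtain ⟨ψ, hψ⟩ := exists_corner_mulEquiv i₀ Φ he
      refine ⟨ψ, fun k => ?_⟩
      have := hΦ k.succ
      simp only [hemb, Fin.cons_succ] at this
      rw [hψ (x k)] at this
      exact congrArg (fun z => z.2.1) (Option.some_injective _ this)
  · -- reverse
    intro hG n hn
    obtain ⟨tG, htG, hrepG⟩ := hG n hn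
    apply exists_finite_reps (AutRel (Brandt G I))
      (fun a => ((fun k => (a k).isSome, fun p q => bflat i₀ a p = bflat i₀ a q,
        (hrepG (bgt a)).choose) :
        (Fin n → Bool) × ((Fin n × Bool) → (Fin n × Bool) → Prop) × (Fin n → G)))
    · apply Set.Finite.subset (Set.finite_univ.prod (Set.finite_univ.prod htG))
      rintro _ ⟨a, rfl⟩
      exact ⟨Set.mem_univ _, Set.mem_univ _, (hrepG (bgt a)).choose_spec.1⟩
    · intro a b hab
      have h1 : ∀ k, (a k).isSome = (b k).isSome :=
        fun k => congrFun (congrArg Prod.fst hab) k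
      have h2 : ∀ p q, bflat i₀ a p = bflat i₀ a q ↔ bflat i₀ b p = bflat i₀ b q :=
        fun p q => iff_of_eq (congrFun (congrFun (congrArg (fun z => z.2.1) hab) p) q)
      have h3 : (hrepG (bgt a)).choose = (hrepG (bgt b)).choose :=
        congrArg (fun z => z.2.2) hab
      obtain ⟨π, hπ⟩ := exists_perm_of_pattern (bflat i₀ a) (bflat i₀ b) h2
      obtain ⟨_, θ₁, hθ₁⟩ := (hrepG (bgt a)).choose_spec
      obtain ⟨_, θ₂, hθ₂⟩ := (hrepG (bgt b)).choose_spec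
      rw [h3] at hθ₁
      set θ : G ≃* G := θ₁.symm.trans θ₂ with hθdef
      have hθ : ∀ k, θ (bgt a k) = bgt b k := by
        intro k
        show θ₂ (θ₁.symm (bgt a k)) = _
        rw [← hθ₁ k, θ₁.symm_apply_apply, hθ₂]
      refine ⟨brandtAut π θ, fun k => ?_⟩
      rcases ha : a k with _ | ⟨i, g, j⟩ <;> rcases hb : b k with _ | ⟨i', g', j'⟩
      · rfl
      · exfalso; have := h1 k; rw [ha, hb] at this; simp at this
      · exfalso; have := h1 k; rw [ha, hb] at this; simp at this
      · have hi : π i = i' := by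
          have := hπ (k, true)
          simpa [bflat, ha, hb] using this
        have hj : π j = j' := by
          have := hπ (k, false)
          simpa [bflat, ha, hb] using this
        have hg : θ g = g' := by
          have := hθ k
          simpa [bgt, ha, hb] using this
        simp only [brandtAut, MulEquiv.coe_mk, Equiv.coe_fn_mk, Option.map_some]
        rw [hi, hj, hg]
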